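/- arXiv:1209.4171 — 2 statements merged into one kernel-verified Lean document; each statement's English description precedes it below -/
import Mathlib

section
/- Let n be a finite-dimensional real nilpotent Lie algebra with inner product, A a derivation of n, and à its orthogonal projection (in the trace inner product) onto the inner derivations. Then ⟨Aˢ, Aˢ⟩ ≥ (1/2)⟨Ã, Ã⟩, where Aˢ = (A + A′)/2, with equality if and only if A − à is a skew-symmetric derivation of n. -/
open LinearMap LieModule

private lemma trace_comp_ad_eq_zero {n : Type*} [LieRing n] [LieAlgebra ℝ n]
    [FiniteDimensional ℝ n] [LieRing.IsNilpotent n]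
    (D : n →ₗ[ℝ] n) (hD : ∀ x y : n, D ⁅x, y⁆ = ⁅D x, y⁆ + ⁅x, D y⁆) (X : n) :
    LinearMap.trace ℝ n (D ∘ₗ (LieAlgebra.ad ℝ n X : n →ₗ[ℝ] n)) = 0 := by
  have hDpres : ∀ k, ∀ x ∈ lowerCentralSeries ℝ n n k, D x ∈ lowerCentralSeries ℝ n n k := by
    intro k
    induction k with
    | zero => intro x _; simp
    | succ k ih =>
      intro x hx
      rw [LieModule.lowerCentralSeries_succ] at hx ⊢
      have hx' : x ∈ Submodule.span ℝ
          {m : n | ∃ y ∈ (⊤ : LieIdeal ℝ n), ∃ z ∈ lowerCentralSeries ℝ n n k, ⁅y, z⁆ = m} := by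
        rw [← LieSubmodule.lieIdeal_oper_eq_linear_span']
        exact hx
      refine Submodule.span_induction ?_ ?_ ?_ ?_ hx'
      · rintro m ⟨y, -, z, hz, rfl⟩
        rw [hD]
        exact add_mem (LieSubmodule.lie_mem_lie (LieSubmodule.mem_top _) hz)
          (LieSubmodule.lie_mem_lie (LieSubmodule.mem_top _) (ih z hz))
      · simp
      · intro a b _ _ ha hb; rw [map_add]; exact add_mem ha hb
      · intro c a _ ha; rw [map_smul]; exact SMulMemClass.smul_mem c ha
  set P : Module.End ℝ n := D ∘ₗ (LieAlgebra.ad ℝ n X : n →ₗ[ℝ] n) with hP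
  have hpow : ∀ k, ∀ x : n, (P ^ k) x ∈ lowerCentralSeries ℝ n n k := by
    intro k
    induction k with
    | zero => intro x; simp
    | succ k ih =>
      intro x
      rw [pow_succ', Module.End.mul_apply]
      have h2 : ⁅X, (P ^ k) x⁆ ∈ lowerCentralSeries ℝ n n (k + 1) := by
        rw [LieModule.lowerCentralSeries_succ]
        exact LieSubmodule.lie_mem_lie (LieSubmodule.mem_top _) (ih x)
      have h3 : P ((P ^ k) x) = D ⁅X, (P ^ k) x⁆ := rfl
      rw [h3]
      exact hDpres _ _ h2
  obtain ⟨k, hk⟩ := LieModule.IsNilpotent.nilpotent ℝ n n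
  have hPk : P ^ k = 0 := by
    ext x
    have hx := hpow k x
    rw [hk] at hx
    simpa using hx
  exact (LinearMap.isNilpotent_trace_of_isNilpotent ⟨k, hPk⟩).eq_zero

/-- For a derivation `A` of a nilpotent metric Lie algebra with orthogonal projection `Atil`
onto the inner derivations, `⟨Aˢ, Aˢ⟩ ≥ (1/2)⟨Atil, Atil⟩`, with equality iff `A - Atil` is a
skew-symmetric derivation. -/
theorem stmt_8 {n : Type*} [LieRing n] [LieAlgebra ℝ n] [FiniteDimensional ℝ n]
    [LieRing.IsNilpotent n]
    (inn : n →ₗ[ℝ] n →ₗ[ℝ] ℝ)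
    (hsymm : ∀ x y : n, inn x y = inn y x)
    (hposdef : ∀ x : n, x ≠ 0 → 0 < inn x x)
    -- `adj C` is the adjoint of `C` with respect to the inner product `inn`:
    (adj : (n →ₗ[ℝ] n) → (n →ₗ[ℝ] n))
    (hadj : ∀ (C : n →ₗ[ℝ] n) (x y : n), inn (C x) y = inn x (adj C y))
    (A Atil : n →ₗ[ℝ] n)
    (hA : ∀ x y : n, A ⁅x, y⁆ = ⁅A x, y⁆ + ⁅x, A y⁆)
    -- `Atil` is an inner derivation:
    (hAtilinner : ∃ X : n, Atil = (LieAlgebra.ad ℝ n X : n →ₗ[ℝ] n))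
    -- `A - Atil` is orthogonal to all inner derivations w.r.t. the trace inner product:
    (hproj : ∀ X : n, LinearMap.trace ℝ n
      ((A - Atil) ∘ₗ adj (LieAlgebra.ad ℝ n X : n →ₗ[ℝ] n)) = 0) :
    (1 / 2 : ℝ) * LinearMap.trace ℝ n (Atil ∘ₗ adj Atil) ≤
      LinearMap.trace ℝ n
        (((1 / 2 : ℝ) • (A + adj A)) ∘ₗ adj ((1 / 2 : ℝ) • (A + adj A))) ∧
    (LinearMap.trace ℝ n
        (((1 / 2 : ℝ) • (A + adj A)) ∘ₗ adj ((1 / 2 : ℝ) • (A + adj A))) =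
      (1 / 2 : ℝ) * LinearMap.trace ℝ n (Atil ∘ₗ adj Atil) ↔
      ((∀ x y : n, (A - Atil) ⁅x, y⁆ = ⁅(A - Atil) x, y⁆ + ⁅x, (A - Atil) y⁆) ∧
        adj (A - Atil) = -(A - Atil))) := by
  classical
  have hself : ∀ v : n, 0 ≤ inn v v := by
    intro v
    by_cases h : v = 0
    · simp [h]
    · exact (hposdef v h).le
  have hdef : ∀ v : n, inn v v = 0 → v = 0 := by
    intro v hv
    by_contra h
    exact absurd hv (ne_of_gt (hposdef v h))
  have hext : ∀ v w : n, (∀ y, inn y v = inn y w) → v = w := by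
    intro v w h
    have h0 : inn (v - w) (v - w) = 0 := by
      have hv : inn (v - w) v = inn (v - w) w := h (v - w)
      have he : inn (v - w) (v - w) = inn (v - w) v - inn (v - w) w := map_sub _ v w
      rw [he, hv, sub_self]
    have := hdef _ h0
    rwa [sub_eq_zero] at this
  have hfunext : ∀ C D : n →ₗ[ℝ] n, (∀ x y : n, inn x (C y) = inn x (D y)) → C = D :=
    fun C D h => LinearMap.ext fun y => hext _ _ fun x => h x y
  have hadj2 : ∀ (C : n →ₗ[ℝ] n) (x y : n), inn (adj C x) y = inn x (C y) := by
    intro C x y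
    rw [hsymm, ← hadj, hsymm]
  have adj_eq : ∀ C D : n →ₗ[ℝ] n, (∀ x y : n, inn (C x) y = inn x (D y)) → adj C = D := by
    intro C D h
    apply hfunext
    intro x y
    rw [← hadj, h]
  have adj_adj : ∀ C : n →ₗ[ℝ] n, adj (adj C) = C := fun C => adj_eq _ _ (hadj2 C)
  have adj_comp : ∀ C D : n →ₗ[ℝ] n, adj (C ∘ₗ D) = adj D ∘ₗ adj C := by
    intro C D
    apply adj_eq
    intro x y
    simp only [LinearMap.comp_apply]
    rw [hadj, hadj]
  have adj_add : ∀ C D : n →ₗ[ℝ] n, adj (C + D) = adj C + adj D := by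
    intro C D
    apply adj_eq
    intro x y
    simp only [LinearMap.add_apply, map_add]
    rw [hadj, hadj]
  have adj_smul : ∀ (c : ℝ) (C : n →ₗ[ℝ] n), adj (c • C) = c • adj C := by
    intro c C
    apply adj_eq
    intro x y
    simp only [LinearMap.smul_apply, map_smul, smul_eq_mul]
    rw [hadj]
  have adj_zero : adj 0 = 0 := adj_eq _ _ (by simp)
  -- inner product space structure and orthonormal basis
  letI icore : InnerProductSpace.Core ℝ n :=
    { inner := fun x y => inn x y
      conj_inner_symm := fun x y => by simpa using hsymm y x
      re_inner_nonneg := fun x => by simpa using hself x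
      add_left := fun x y z => by simp [map_add, LinearMap.add_apply]
      smul_left := fun x y r => by simp [map_smul, smul_eq_mul]
      definite := fun x hx => hdef x (by simpa using hx) }
  letI : NormedAddCommGroup n := icore.toNormedAddCommGroup
  letI : InnerProductSpace ℝ n := InnerProductSpace.ofCore icore.toCore
  let b := stdOrthonormalBasis ℝ n
  have htr : ∀ M : n →ₗ[ℝ] n,
      LinearMap.trace ℝ n M = ∑ i, inn (M (b i)) (b i) := by
    intro M
    rw [LinearMap.trace_eq_matrix_trace ℝ b.toBasis M]
    simp only [Matrix.trace, Matrix.diag_apply, LinearMap.toMatrix_apply,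
      OrthonormalBasis.coe_toBasis_repr_apply, OrthonormalBasis.repr_apply_apply,
      OrthonormalBasis.coe_toBasis]
    exact Finset.sum_congr rfl fun i _ => hsymm _ _
  have htradj : ∀ M : n →ₗ[ℝ] n,
      LinearMap.trace ℝ n (adj M) = LinearMap.trace ℝ n M := by
    intro M
    rw [htr, htr]
    exact Finset.sum_congr rfl fun i _ => by rw [hadj2, hsymm]
  have hterm_eq : ∀ (C : n →ₗ[ℝ] n) i,
      inn ((C ∘ₗ adj C) (b i)) (b i) = inn (adj C (b i)) (adj C (b i)) := by
    intro C i
    rw [LinearMap.comp_apply]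
    exact hadj C (adj C (b i)) (b i)
  have hTnonneg : ∀ C : n →ₗ[ℝ] n, 0 ≤ LinearMap.trace ℝ n (C ∘ₗ adj C) := by
    intro C
    rw [htr]
    exact Finset.sum_nonneg fun i _ => by rw [hterm_eq]; exact hself _
  have hTzero : ∀ C : n →ₗ[ℝ] n, LinearMap.trace ℝ n (C ∘ₗ adj C) = 0 → C = 0 := by
    intro C hC
    rw [htr] at hC
    have hnn : ∀ i ∈ Finset.univ, (0 : ℝ) ≤ inn ((C ∘ₗ adj C) (b i)) (b i) :=
      fun i _ => by rw [hterm_eq]; exact hself _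
    have hall := (Finset.sum_eq_zero_iff_of_nonneg hnn).mp hC
    have hzero : ∀ i, adj C (b i) = 0 := by
      intro i
      apply hdef
      have := hall i (Finset.mem_univ i)
      rwa [hterm_eq] at this
    have hadjC0 : adj C = 0 := by
      apply b.toBasis.ext
      intro i
      simp only [OrthonormalBasis.coe_toBasis, LinearMap.zero_apply]
      exact hzero i
    calc C = adj (adj C) := (adj_adj C).symm
      _ = adj 0 := by rw [hadjC0]
      _ = 0 := adj_zero
  -- derivation facts and orthogonality relations
  obtain ⟨X, hX⟩ := hAtilinner
  have hAtilder : ∀ x y : n, Atil ⁅x, y⁆ = ⁅Atil x, y⁆ + ⁅x, Atil y⁆ := by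
    intro x y
    simp only [hX, LieAlgebra.ad_apply]
    exact leibniz_lie X x y
  set B := A - Atil with hB
  have hBder : ∀ x y : n, B ⁅x, y⁆ = ⁅B x, y⁆ + ⁅x, B y⁆ := by
    intro x y
    simp only [hB, LinearMap.sub_apply, hA, hAtilder, sub_lie, lie_sub]
    abel
  have h1 : LinearMap.trace ℝ n (B ∘ₗ adj Atil) = 0 := by
    have h := hproj X
    rwa [← hX] at h
  have h2 : LinearMap.trace ℝ n (B ∘ₗ Atil) = 0 := by
    rw [hX]
    exact trace_comp_ad_eq_zero B hBder X
  have h2' : LinearMap.trace ℝ n (Atil ∘ₗ B) = 0 := by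
    rw [LinearMap.trace_comp_comm']
    exact h2
  have h3 : LinearMap.trace ℝ n (Atil ∘ₗ Atil) = 0 := by
    rw [hX]
    exact trace_comp_ad_eq_zero _
      (fun x y => by simp only [LieAlgebra.ad_apply]; exact leibniz_lie X x y) X
  have h4 : LinearMap.trace ℝ n (Atil ∘ₗ adj B) = 0 := by
    have e : Atil ∘ₗ adj B = adj (B ∘ₗ adj Atil) := by rw [adj_comp, adj_adj]
    rw [e, htradj, h1]
  -- the square expansion
  have hsq : ∀ C : n →ₗ[ℝ] n,
      LinearMap.trace ℝ n (((1 / 2 : ℝ) • (C + adj C)) ∘ₗ adj ((1 / 2 : ℝ) • (C + adj C))) =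
        (1 / 2 : ℝ) * (LinearMap.trace ℝ n (C ∘ₗ adj C) + LinearMap.trace ℝ n (C ∘ₗ C)) := by
    intro C
    have hadjS : adj ((1 / 2 : ℝ) • (C + adj C)) = (1 / 2 : ℝ) • (adj C + C) := by
      rw [adj_smul, adj_add, adj_adj]
    have h6 : LinearMap.trace ℝ n (adj C ∘ₗ adj C) = LinearMap.trace ℝ n (C ∘ₗ C) := by
      have h := htradj (C ∘ₗ C)
      rwa [adj_comp] at h
    have h7 : LinearMap.trace ℝ n (adj C ∘ₗ C) = LinearMap.trace ℝ n (C ∘ₗ adj C) := by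
      rw [LinearMap.trace_comp_comm']
    rw [hadjS]
    simp only [LinearMap.smul_comp, LinearMap.comp_smul, LinearMap.add_comp,
      LinearMap.comp_add, map_smul, map_add, smul_eq_mul, smul_smul]
    rw [h6, h7]
    ring
  have hA2 : A = B + Atil := by rw [hB]; abel
  have hdec1 : LinearMap.trace ℝ n (A ∘ₗ adj A) =
      LinearMap.trace ℝ n (B ∘ₗ adj B) + LinearMap.trace ℝ n (Atil ∘ₗ adj Atil) := by
    conv_lhs => rw [hA2]
    rw [adj_add]
    simp only [LinearMap.add_comp, LinearMap.comp_add, map_add]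
    rw [h1, h4]
    ring
  have hdec2 : LinearMap.trace ℝ n (A ∘ₗ A) = LinearMap.trace ℝ n (B ∘ₗ B) := by
    conv_lhs => rw [hA2]
    simp only [LinearMap.add_comp, LinearMap.comp_add, map_add]
    rw [h2, h2', h3]
    ring
  have hmain : LinearMap.trace ℝ n
      (((1 / 2 : ℝ) • (A + adj A)) ∘ₗ adj ((1 / 2 : ℝ) • (A + adj A))) =
      LinearMap.trace ℝ n (((1 / 2 : ℝ) • (B + adj B)) ∘ₗ adj ((1 / 2 : ℝ) • (B + adj B))) +
        (1 / 2 : ℝ) * LinearMap.trace ℝ n (Atil ∘ₗ adj Atil) := by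
    rw [hsq A, hsq B, hdec1, hdec2]
    ring
  refine ⟨?_, ?_, ?_⟩
  · linarith [hmain, hTnonneg ((1 / 2 : ℝ) • (B + adj B))]
  · intro heq
    refine ⟨hBder, ?_⟩
    have h0 : LinearMap.trace ℝ n
        (((1 / 2 : ℝ) • (B + adj B)) ∘ₗ adj ((1 / 2 : ℝ) • (B + adj B))) = 0 := by
      linarith [hmain]
    have hBs0 := hTzero _ h0
    have hsum : B + adj B = 0 := by
      rcases smul_eq_zero.mp hBs0 with h | h
      · norm_num at h
      · exact h
    exact eq_neg_of_add_eq_zero_right hsum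
  · rintro ⟨-, hskew⟩
    have hsum : B + adj B = 0 := by rw [hskew, add_neg_cancel]
    have hz : LinearMap.trace ℝ n
        (((1 / 2 : ℝ) • (B + adj B)) ∘ₗ adj ((1 / 2 : ℝ) • (B + adj B))) = 0 := by
      rw [hsum]
      simp [adj_zero]
    linarith [hmain]
end

section
/- Let à be a real symmetric n×n matrix and A the (n−1)×(n−1) matrix obtained from à by deleting the last row and last column. If λ₁ ≤ ... ≤ λ_{n−1} are the eigenvalues of A and λ̃₁ ≤ ... ≤ λ̃_n those of Ã, then λ̃₁ ≤ λ₁ ≤ λ̃₂ ≤ λ₂ ≤ ... ≤ λ_{n−1} ≤ λ̃_n (Cauchy interlacing). -/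
set_option linter.unusedSectionVars false

open Matrix Finset Submodule Module

section helpers

variable {m : ℕ} {ι : Type*} [Fintype ι] [DecidableEq ι]

lemma sum_dot (s : Finset ι) (f : ι → Fin m → ℝ) (y : Fin m → ℝ) :
    (∑ i ∈ s, f i) ⬝ᵥ y = ∑ i ∈ s, f i ⬝ᵥ y := by
  simp only [dotProduct, Finset.sum_apply, Finset.sum_mul]
  rw [Finset.sum_comm]

lemma dot_sum (s : Finset ι) (f : ι → Fin m → ℝ) (y : Fin m → ℝ) :
    y ⬝ᵥ (∑ i ∈ s, f i) = ∑ i ∈ s, y ⬝ᵥ f i := by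
  simp only [dotProduct, Finset.sum_apply, Finset.mul_sum]
  rw [Finset.sum_comm]

variable {w : ι → Fin m → ℝ}
  (horth : ∀ i j, w i ⬝ᵥ w j = if i = j then (1:ℝ) else 0)

include horth in
lemma dot_sum_sum (c d : ι → ℝ) :
    (∑ i, c i • w i) ⬝ᵥ (∑ j, d j • w j) = ∑ i, c i * d i := by
  rw [sum_dot]
  refine Finset.sum_congr rfl fun i _ => ?_
  rw [smul_dotProduct, dot_sum]
  simp [dotProduct_smul, horth, mul_ite, smul_eq_mul, Finset.sum_ite_eq']

include horth in
lemma li_w : LinearIndependent ℝ w := by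
  rw [Fintype.linearIndependent_iff]
  intro g hg i
  have h := congrArg (fun y => w i ⬝ᵥ y) hg
  simpa [dot_sum, dotProduct_smul, horth, mul_ite, Finset.sum_ite_eq'] using h

include horth in
lemma finrank_span_w : finrank ℝ (span ℝ (Set.range w)) = Fintype.card ι :=
  finrank_span_eq_card (li_w horth)

include horth in
lemma mulvec_sum_repr (M : Matrix (Fin m) (Fin m) ℝ) (ev : ι → ℝ)
    (heig : ∀ j, M *ᵥ w j = ev j • w j) (c : ι → ℝ) :
    (∑ i, c i • w i) ⬝ᵥ (M *ᵥ ∑ j, c j • w j) = ∑ j, ev j * (c j * c j) := by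
  have hMv : M *ᵥ (∑ j, c j • w j) = ∑ j, (c j * ev j) • w j := by
    have : M *ᵥ (∑ j, c j • w j) = M.mulVecLin (∑ j, c j • w j) := rfl
    rw [this, map_sum]
    refine Finset.sum_congr rfl fun j _ => ?_
    rw [_root_.map_smul, Matrix.mulVecLin_apply, heig, smul_smul]
  rw [hMv, dot_sum_sum horth]
  refine Finset.sum_congr rfl fun j _ => by ring

include horth in
lemma ray_le (M : Matrix (Fin m) (Fin m) ℝ) (ev : ι → ℝ)
    (heig : ∀ j, M *ᵥ w j = ev j • w j) (a : ℝ) (hub : ∀ j, ev j ≤ a)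
    {x : Fin m → ℝ} (hx : x ∈ span ℝ (Set.range w)) :
    x ⬝ᵥ (M *ᵥ x) ≤ a * (x ⬝ᵥ x) := by
  obtain ⟨c, rfl⟩ := (mem_span_range_iff_exists_fun ℝ).1 hx
  rw [mulvec_sum_repr horth M ev heig, dot_sum_sum horth, Finset.mul_sum]
  exact Finset.sum_le_sum fun j _ =>
    mul_le_mul_of_nonneg_right (hub j) (mul_self_nonneg _)

include horth in
lemma ray_ge (M : Matrix (Fin m) (Fin m) ℝ) (ev : ι → ℝ)
    (heig : ∀ j, M *ᵥ w j = ev j • w j) (a : ℝ) (hlb : ∀ j, a ≤ ev j)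
    {x : Fin m → ℝ} (hx : x ∈ span ℝ (Set.range w)) :
    a * (x ⬝ᵥ x) ≤ x ⬝ᵥ (M *ᵥ x) := by
  obtain ⟨c, rfl⟩ := (mem_span_range_iff_exists_fun ℝ).1 hx
  rw [mulvec_sum_repr horth M ev heig, dot_sum_sum horth, Finset.mul_sum]
  exact Finset.sum_le_sum fun j _ =>
    mul_le_mul_of_nonneg_right (hlb j) (mul_self_nonneg _)

lemma dot_self_pos {x : Fin m → ℝ} (hx : x ≠ 0) : 0 < x ⬝ᵥ x := by
  obtain ⟨i, hi⟩ : ∃ i, x i ≠ 0 := by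
    by_contra h; push_neg at h; exact hx (funext h)
  exact Finset.sum_pos' (fun j _ => mul_self_nonneg _)
    ⟨i, Finset.mem_univ i, mul_self_pos.mpr hi⟩

end helpers
section emb

open Matrix Finset Submodule Module

variable {n : ℕ}

noncomputable def embL (n : ℕ) : (Fin n → ℝ) →ₗ[ℝ] (Fin (n + 1) → ℝ) where
  toFun x := fun j => if h : (j : ℕ) < n then x ⟨j, h⟩ else 0
  map_add' x y := by funext j; by_cases h : (j : ℕ) < n <;> simp [h]
  map_smul' c x := by funext j; by_cases h : (j : ℕ) < n <;> simp [h]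

lemma embL_castSucc (x : Fin n → ℝ) (i : Fin n) : embL n x i.castSucc = x i := by
  simp [embL, i.isLt, Fin.castSucc]

lemma embL_last (x : Fin n → ℝ) : embL n x (Fin.last n) = 0 := by
  simp [embL]

lemma embL_dot (x y : Fin n → ℝ) : embL n x ⬝ᵥ embL n y = x ⬝ᵥ y := by
  unfold dotProduct
  rw [Fin.sum_univ_castSucc]
  simp [embL_castSucc, embL_last]

lemma embL_ray (Atil : Matrix (Fin (n + 1)) (Fin (n + 1)) ℝ)
    (A : Matrix (Fin n) (Fin n) ℝ)
    (hAdef : A = Atil.submatrix Fin.castSucc Fin.castSucc) (y : Fin n → ℝ) :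
    embL n y ⬝ᵥ (Atil *ᵥ embL n y) = y ⬝ᵥ (A *ᵥ y) := by
  unfold dotProduct Matrix.mulVec
  rw [Fin.sum_univ_castSucc]
  simp only [embL_castSucc, embL_last, zero_mul, add_zero]
  refine Finset.sum_congr rfl fun i _ => ?_
  congr 1
  unfold dotProduct
  rw [Fin.sum_univ_castSucc]
  simp [embL_castSucc, embL_last, hAdef]

lemma exists_mem_inf_ne_zero {m : ℕ} (P Q : Submodule ℝ (Fin m → ℝ))
    (h : m < finrank ℝ P + finrank ℝ Q) :
    ∃ x : Fin m → ℝ, x ∈ P ∧ x ∈ Q ∧ x ≠ 0 := by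
  have h1 : finrank ℝ ↥(P ⊔ Q) + finrank ℝ ↥(P ⊓ Q) = finrank ℝ P + finrank ℝ Q :=
    Submodule.finrank_sup_add_finrank_inf_eq P Q
  have h2 : finrank ℝ ↥(P ⊔ Q) ≤ m := by
    simpa [Module.finrank_fin_fun] using Submodule.finrank_le (P ⊔ Q)
  have h3 : 0 < finrank ℝ ↥(P ⊓ Q) := by omega
  obtain ⟨x, hx⟩ := Module.finrank_pos_iff_exists_ne_zero.mp h3
  exact ⟨x.1, x.2.1, x.2.2, fun h0 => hx (Subtype.ext h0)⟩

end emb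
open Matrix Finset Submodule Module
/-- Cauchy interlacing: the eigenvalues of a real symmetric matrix and those of the principal
submatrix obtained by deleting the last row and column interlace. -/
theorem stmt_10 {n : ℕ} (Atil : Matrix (Fin (n + 1)) (Fin (n + 1)) ℝ)
    (hAtil : Atil.IsHermitian)
    (A : Matrix (Fin n) (Fin n) ℝ)
    (hAdef : A = Atil.submatrix Fin.castSucc Fin.castSucc)
    (hA : A.IsHermitian)
    (lam : Fin n → ℝ) (mu : Fin (n + 1) → ℝ)
    (hlam_mono : Monotone lam) (hmu_mono : Monotone mu)
    -- `lam` and `mu` are the eigenvalues (with multiplicity) arranged in increasing order: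
    (hlam : ∃ σ : Equiv.Perm (Fin n), lam = hA.eigenvalues ∘ σ)
    (hmu : ∃ σ : Equiv.Perm (Fin (n + 1)), mu = hAtil.eigenvalues ∘ σ) :
    ∀ i : Fin n, mu i.castSucc ≤ lam i ∧ lam i ≤ mu i.succ := by
  obtain ⟨σ, hσ⟩ := hmu
  obtain ⟨τ, hτ⟩ := hlam
  set u : Fin (n + 1) → (Fin (n + 1) → ℝ) := fun j => ⇑(hAtil.eigenvectorBasis (σ j)) with hu
  set v : Fin n → (Fin n → ℝ) := fun j => ⇑(hA.eigenvectorBasis (τ j)) with hv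
  have horthu : ∀ i j, u i ⬝ᵥ u j = if i = j then (1:ℝ) else 0 := by
    intro i j
    have h := orthonormal_iff_ite.mp hAtil.eigenvectorBasis.orthonormal (σ i) (σ j)
    simp only [PiLp.inner_apply, RCLike.inner_apply, conj_trivial] at h
    simpa [hu, dotProduct, Equiv.apply_eq_iff_eq, mul_comm] using h
  have horthv : ∀ i j, v i ⬝ᵥ v j = if i = j then (1:ℝ) else 0 := by
    intro i j
    have h := orthonormal_iff_ite.mp hA.eigenvectorBasis.orthonormal (τ i) (τ j)
    simp only [PiLp.inner_apply, RCLike.inner_apply, conj_trivial] at h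
    simpa [hv, dotProduct, Equiv.apply_eq_iff_eq, mul_comm] using h
  have heigu : ∀ j, Atil *ᵥ u j = mu j • u j := fun j => by
    rw [hσ]; exact hAtil.mulVec_eigenvectorBasis (σ j)
  have heigv : ∀ j, A *ᵥ v j = lam j • v j := fun j => by
    rw [hτ]; exact hA.mulVec_eigenvectorBasis (τ j)
  intro i
  constructor
  · -- mu i.castSucc ≤ lam i
    set SU := Finset.Ici i.castSucc with hSU
    set SV := Finset.Iic i with hSV
    set wU : ↥SU → (Fin (n + 1) → ℝ) := fun j => u j.1 with hwU
    set wE : ↥SV → (Fin (n + 1) → ℝ) := fun j => embL n (v j.1) with hwE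
    set wV : ↥SV → (Fin n → ℝ) := fun j => v j.1 with hwV
    have horthU : ∀ a b, wU a ⬝ᵥ wU b = if a = b then (1:ℝ) else 0 := fun a b => by
      rw [hwU]; rw [horthu]; simp [Subtype.coe_inj]
    have horthV : ∀ a b, wV a ⬝ᵥ wV b = if a = b then (1:ℝ) else 0 := fun a b => by
      rw [hwV]; rw [horthv]; simp [Subtype.coe_inj]
    have horthE : ∀ a b, wE a ⬝ᵥ wE b = if a = b then (1:ℝ) else 0 := fun a b => by
      rw [hwE]; rw [embL_dot]; exact horthV a b
    have hrkU : finrank ℝ (span ℝ (Set.range wU)) = (n + 1) - i.1 := by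
      rw [finrank_span_w horthU, Fintype.card_coe, hSU, Fin.card_Ici, Fin.coe_castSucc]
    have hrkE : finrank ℝ (span ℝ (Set.range wE)) = i.1 + 1 := by
      rw [finrank_span_w horthE, Fintype.card_coe, hSV, Fin.card_Iic]
    obtain ⟨x, hxP, hxQ, hxne⟩ := exists_mem_inf_ne_zero
      (span ℝ (Set.range wU)) (span ℝ (Set.range wE))
      (by rw [hrkU, hrkE]; have := i.isLt; omega)
    obtain ⟨c, hc⟩ := (mem_span_range_iff_exists_fun ℝ).1 hxQ
    set y : Fin n → ℝ := ∑ j, c j • v j.1 with hy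
    have hxy : x = embL n y := by
      rw [hy, map_sum, ← hc]
      exact Finset.sum_congr rfl fun j _ => by rw [_root_.map_smul]
    have hymem : y ∈ span ℝ (Set.range wV) :=
      sum_mem fun j _ => smul_mem _ _ (subset_span ⟨j, rfl⟩)
    have hyne : y ≠ 0 := fun h0 => hxne (by rw [hxy, h0, map_zero])
    have ht : 0 < y ⬝ᵥ y := dot_self_pos hyne
    have hxx : x ⬝ᵥ x = y ⬝ᵥ y := by rw [hxy, embL_dot]
    have hb1 : mu i.castSucc * (x ⬝ᵥ x) ≤ x ⬝ᵥ (Atil *ᵥ x) :=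
      ray_ge horthU Atil (fun j => mu j.1) (fun j => heigu j.1) (mu i.castSucc)
        (fun j => hmu_mono (Finset.mem_Ici.mp j.2)) hxP
    have hb2 : y ⬝ᵥ (A *ᵥ y) ≤ lam i * (y ⬝ᵥ y) :=
      ray_le horthV A (fun j => lam j.1) (fun j => heigv j.1) (lam i)
        (fun j => hlam_mono (Finset.mem_Iic.mp j.2)) hymem
    have hray : x ⬝ᵥ (Atil *ᵥ x) = y ⬝ᵥ (A *ᵥ y) := by rw [hxy, embL_ray Atil A hAdef]
    have : mu i.castSucc * (y ⬝ᵥ y) ≤ lam i * (y ⬝ᵥ y) := by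
      rw [← hxx]; calc mu i.castSucc * (x ⬝ᵥ x) ≤ x ⬝ᵥ (Atil *ᵥ x) := hb1
        _ = y ⬝ᵥ (A *ᵥ y) := hray
        _ ≤ lam i * (y ⬝ᵥ y) := hb2
        _ = lam i * (x ⬝ᵥ x) := by rw [hxx]
    exact le_of_mul_le_mul_right this ht
  · -- lam i ≤ mu i.succ
    set SU := Finset.Iic i.succ with hSU
    set SV := Finset.Ici i with hSV
    set wU : ↥SU → (Fin (n + 1) → ℝ) := fun j => u j.1 with hwU
    set wE : ↥SV → (Fin (n + 1) → ℝ) := fun j => embL n (v j.1) with hwE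
    set wV : ↥SV → (Fin n → ℝ) := fun j => v j.1 with hwV
    have horthU : ∀ a b, wU a ⬝ᵥ wU b = if a = b then (1:ℝ) else 0 := fun a b => by
      rw [hwU]; rw [horthu]; simp [Subtype.coe_inj]
    have horthV : ∀ a b, wV a ⬝ᵥ wV b = if a = b then (1:ℝ) else 0 := fun a b => by
      rw [hwV]; rw [horthv]; simp [Subtype.coe_inj]
    have horthE : ∀ a b, wE a ⬝ᵥ wE b = if a = b then (1:ℝ) else 0 := fun a b => by
      rw [hwE]; rw [embL_dot]; exact horthV a b
    have hrkU : finrank ℝ (span ℝ (Set.range wU)) = i.1 + 2 := by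
      rw [finrank_span_w horthU, Fintype.card_coe, hSU, Fin.card_Iic, Fin.val_succ]
    have hrkE : finrank ℝ (span ℝ (Set.range wE)) = n - i.1 := by
      rw [finrank_span_w horthE, Fintype.card_coe, hSV, Fin.card_Ici]
    obtain ⟨x, hxP, hxQ, hxne⟩ := exists_mem_inf_ne_zero
      (span ℝ (Set.range wU)) (span ℝ (Set.range wE))
      (by rw [hrkU, hrkE]; have := i.isLt; omega)
    obtain ⟨c, hc⟩ := (mem_span_range_iff_exists_fun ℝ).1 hxQ
    set y : Fin n → ℝ := ∑ j, c j • v j.1 with hy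
    have hxy : x = embL n y := by
      rw [hy, map_sum, ← hc]
      exact Finset.sum_congr rfl fun j _ => by rw [_root_.map_smul]
    have hymem : y ∈ span ℝ (Set.range wV) :=
      sum_mem fun j _ => smul_mem _ _ (subset_span ⟨j, rfl⟩)
    have hyne : y ≠ 0 := fun h0 => hxne (by rw [hxy, h0, map_zero])
    have ht : 0 < y ⬝ᵥ y := dot_self_pos hyne
    have hxx : x ⬝ᵥ x = y ⬝ᵥ y := by rw [hxy, embL_dot]
    have hb1 : x ⬝ᵥ (Atil *ᵥ x) ≤ mu i.succ * (x ⬝ᵥ x) :=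
      ray_le horthU Atil (fun j => mu j.1) (fun j => heigu j.1) (mu i.succ)
        (fun j => hmu_mono (Finset.mem_Iic.mp j.2)) hxP
    have hb2 : lam i * (y ⬝ᵥ y) ≤ y ⬝ᵥ (A *ᵥ y) :=
      ray_ge horthV A (fun j => lam j.1) (fun j => heigv j.1) (lam i)
        (fun j => hlam_mono (Finset.mem_Ici.mp j.2)) hymem
    have hray : x ⬝ᵥ (Atil *ᵥ x) = y ⬝ᵥ (A *ᵥ y) := by rw [hxy, embL_ray Atil A hAdef]
    have : lam i * (y ⬝ᵥ y) ≤ mu i.succ * (y ⬝ᵥ y) := by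
      calc lam i * (y ⬝ᵥ y) ≤ y ⬝ᵥ (A *ᵥ y) := hb2
        _ = x ⬝ᵥ (Atil *ᵥ x) := hray.symm
        _ ≤ mu i.succ * (x ⬝ᵥ x) := hb1
        _ = mu i.succ * (y ⬝ᵥ y) := by rw [hxx]
    exact le_of_mul_le_mul_right this ht
end
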